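/- arXiv:2201.01558 — 2 statements merged into one kernel-verified Lean document; each statement's English description precedes it below -/
import Mathlib

section
/- Let m ≥ 1 be an odd integer and n = 2m+1. Define s ∈ (ℤ_{4m+2})^n by s_{2j+1} = 3m+2+2j and s_{2j+2} = m+2+2j (mod 4m+2) for 0 ≤ j ≤ m−1, and s_{2m+1} = m (which equals 3m+2+2m modulo 4m+2). Then the non-cyclic error ball E(n,2,1,0) splits ℤ_{4m+2} with splitting sequence s. -/
/-- The non-cyclic error ball `E(n,b,k₊,k₋)`: vectors `e ∈ [−k₋,k₊]^n` (indices `0,…,n−1`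
corresponding to coordinates `1,…,n`) such that for some `i`, all entries outside the
window `[i, i+b−1]` vanish. -/
def nonCyclicBall (n b kp km : ℕ) : Set (Fin n → ℤ) :=
  {e | (∀ ℓ, -(km : ℤ) ≤ e ℓ ∧ e ℓ ≤ (kp : ℤ)) ∧
    ∃ i : Fin n, ∀ ℓ : Fin n, (ℓ.val < i.val ∨ i.val + b ≤ ℓ.val) → e ℓ = 0}

/-- The cyclic error ball `E°(n,b,k₊,k₋)`: vectors `e ∈ [−k₋,k₊]^n` such that for some
`i ∈ ℤ_n`, all entries outside the cyclic window `{i, i+1, …, i+b−1}` vanish. -/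
def cyclicBall (n b kp km : ℕ) : Set (Fin n → ℤ) :=
  {e | (∀ ℓ, -(km : ℤ) ≤ e ℓ ∧ e ℓ ≤ (kp : ℤ)) ∧
    ∃ i : ZMod n, ∀ ℓ : Fin n,
      (∀ j : ℕ, j < b → ((ℓ.val : ZMod n) ≠ i + (j : ZMod n))) → e ℓ = 0}
/-- The set `A ⊆ ℤ^n` splits the abelian group `G` with splitting sequence `s`
if the map `a ↦ Σ aᵢ sᵢ` is injective on `A`. -/
def Splits {n : ℕ} {G : Type*} [AddCommGroup G] (A : Set (Fin n → ℤ)) (s : Fin n → G) : Prop :=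
  Set.InjOn (fun a => ∑ i, a i • s i) A

/-- auxiliary: from a cast equality in `ZMod N`, get divisibility of the difference. -/
lemma aux_cast_dvd {N x y : ℕ} (h : (x : ZMod N) = y) : (N : ℤ) ∣ (x : ℤ) - y := by
  have hx : ((x : ℤ) : ZMod N) = ((y : ℤ) : ZMod N) := by push_cast; exact_mod_cast h
  have := ((ZMod.intCast_eq_intCast_iff _ _ _).mp hx).symm.dvd
  simpa using this

/-- auxiliary: divisibility with a shift. -/
lemma aux_resolve {N d c : ℤ} (h : N ∣ d) (hb : |d - N * c| < N) : d = N * c := by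
  have h2 : N ∣ d - N * c := dvd_sub h (dvd_mul_right N c)
  have := Int.eq_zero_of_abs_lt_dvd h2 hb
  omega

/-- the splitting sequence. -/
def sfun (m : ℕ) : Fin (2 * m + 1) → ZMod (4 * m + 2) := fun t =>
  if t.val % 2 = 0 then ((3 * m + 2 + t.val : ℕ) : ZMod (4 * m + 2))
  else ((m + 1 + t.val : ℕ) : ZMod (4 * m + 2))

lemma aux_sum_sing {n : ℕ} {G : Type*} [AddCommGroup G] (s : Fin n → G) (t : Fin n) :
    ∑ ℓ, (if ℓ = t then (1 : ℤ) else 0) • s ℓ = s t := by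
  rw [Finset.sum_eq_single t]
  · simp
  · intro b _ hb; simp [hb]
  · simp

lemma aux_sum_dbl {n : ℕ} {G : Type*} [AddCommGroup G] (s : Fin n → G) (t : ℕ)
    (h : t + 1 < n) :
    ∑ ℓ : Fin n, (if ℓ.val = t ∨ ℓ.val = t + 1 then (1 : ℤ) else 0) • s ℓ
      = s ⟨t, by omega⟩ + s ⟨t + 1, h⟩ := by
  have hfe : ∀ ℓ : Fin n, (if ℓ.val = t ∨ ℓ.val = t + 1 then (1 : ℤ) else 0)
      = (if ℓ = ⟨t, by omega⟩ then (1 : ℤ) else 0) + (if ℓ = ⟨t + 1, h⟩ then (1 : ℤ) else 0) := by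
    intro ℓ
    by_cases h1 : ℓ = (⟨t, by omega⟩ : Fin n) <;> by_cases h2 : ℓ = (⟨t + 1, h⟩ : Fin n) <;>
      simp_all [Fin.ext_iff] <;> omega
  simp only [hfe, add_smul, Finset.sum_add_distrib, aux_sum_sing]

/-- classification of elements of the ball `E(n,2,1,0)`. -/
lemma aux_classify {n : ℕ} {a : Fin n → ℤ} (ha : a ∈ nonCyclicBall n 2 1 0) :
    a = 0 ∨ (∃ t : Fin n, a = fun ℓ => if ℓ = t then (1 : ℤ) else 0) ∨
      (∃ t : ℕ, t + 1 < n ∧ a = fun ℓ => if ℓ.val = t ∨ ℓ.val = t + 1 then (1 : ℤ) else 0) := by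
  obtain ⟨hrange, i, hi⟩ := ha
  have hval : ∀ ℓ, a ℓ = 0 ∨ a ℓ = 1 := by
    intro ℓ; have := hrange ℓ; omega
  have hzero : ∀ ℓ : Fin n, ℓ.val ≠ i.val → ℓ.val ≠ i.val + 1 → a ℓ = 0 := by
    intro ℓ h1 h2; exact hi ℓ (by omega)
  by_cases hlt : i.val + 1 < n
  · set j : Fin n := ⟨i.val + 1, hlt⟩ with hj
    rcases hval i with hv | hv <;> rcases hval j with hw | hw
    · left
      funext ℓ
      by_cases h1 : ℓ = i
      · simp [h1, hv]
      · by_cases h2 : ℓ = j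
        · simp [h2, hw]
        · have h1' : ℓ.val ≠ i.val := fun h => h1 (Fin.ext h)
          have h2' : ℓ.val ≠ i.val + 1 := fun h => h2 (Fin.ext h)
          simpa using hzero ℓ h1' h2'
    · right; left
      refine ⟨j, ?_⟩
      funext ℓ
      by_cases h2 : ℓ = j
      · simp [h2, hw]
      · rw [if_neg h2]
        by_cases h1 : ℓ = i
        · simp [h1, hv]
        · have h1' : ℓ.val ≠ i.val := fun h => h1 (Fin.ext h)
          have h2' : ℓ.val ≠ i.val + 1 := fun h => h2 (Fin.ext h)
          exact hzero ℓ h1' h2'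
    · right; left
      refine ⟨i, ?_⟩
      funext ℓ
      by_cases h1 : ℓ = i
      · simp [h1, hv]
      · rw [if_neg h1]
        by_cases h2 : ℓ = j
        · simp [h2, hw]
        · have h1' : ℓ.val ≠ i.val := fun h => h1 (Fin.ext h)
          have h2' : ℓ.val ≠ i.val + 1 := fun h => h2 (Fin.ext h)
          exact hzero ℓ h1' h2'
    · right; right
      refine ⟨i.val, hlt, ?_⟩
      funext ℓ
      by_cases h1 : ℓ = i
      · simp [h1, hv]
      · by_cases h2 : ℓ = j
        · have : ℓ.val = i.val + 1 := by rw [h2]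
          rw [if_pos (Or.inr this), h2, hw]
        · have h1' : ℓ.val ≠ i.val := fun h => h1 (Fin.ext h)
          have h2' : ℓ.val ≠ i.val + 1 := fun h => h2 (Fin.ext h)
          rw [if_neg (by push_neg; exact ⟨h1', h2'⟩)]
          exact hzero ℓ h1' h2'
  · -- i is the last index
    rcases hval i with hv | hv
    · left
      funext ℓ
      by_cases h1 : ℓ = i
      · simp [h1, hv]
      · have h1' : ℓ.val ≠ i.val := fun h => h1 (Fin.ext h)
        have h2' : ℓ.val ≠ i.val + 1 := by have := ℓ.isLt; omega
        simpa using hzero ℓ h1' h2'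
    · right; left
      refine ⟨i, ?_⟩
      funext ℓ
      by_cases h1 : ℓ = i
      · simp [h1, hv]
      · rw [if_neg h1]
        have h1' : ℓ.val ≠ i.val := fun h => h1 (Fin.ext h)
        have h2' : ℓ.val ≠ i.val + 1 := by have := ℓ.isLt; omega
        exact hzero ℓ h1' h2'

lemma aux_dbl_val (m t : ℕ) (h : t + 1 < 2 * m + 1) :
    sfun m ⟨t, by omega⟩ + sfun m ⟨t + 1, h⟩ = ((4 * m + 4 + 2 * t : ℕ) : ZMod (4 * m + 2)) := by
  rcases Nat.even_or_odd t with he | ho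
  · have h1 : t % 2 = 0 := Nat.even_iff.mp he
    have h2 : (t + 1) % 2 = 1 := by omega
    simp only [sfun, h1, h2, if_true, if_false, reduceIte]
    push_cast
    ring
  · have h1 : t % 2 = 1 := Nat.odd_iff.mp ho
    have h2 : (t + 1) % 2 = 0 := by omega
    simp only [sfun, h1, h2, reduceIte]
    push_cast
    ring

/-- singles are nonzero -/
lemma aux_sing_ne_zero (m : ℕ) (hmo : Odd m) (t : Fin (2 * m + 1)) : sfun m t ≠ 0 := by
  obtain ⟨r, hr⟩ := hmo
  have ht := t.isLt
  intro h
  by_cases hp : t.val % 2 = 0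
  · rw [sfun, if_pos hp] at h
    have hd : ((4 * m + 2 : ℕ) : ℤ) ∣ ((3 * m + 2 + t.val : ℕ) : ℤ) - ((0 : ℕ) : ℤ) :=
      aux_cast_dvd (by simpa using h)
    have := aux_resolve (c := 1) hd (by push_cast; rw [abs_lt]; omega)
    push_cast at this; omega
  · rw [sfun, if_neg hp] at h
    have hd : ((4 * m + 2 : ℕ) : ℤ) ∣ ((m + 1 + t.val : ℕ) : ℤ) - ((0 : ℕ) : ℤ) :=
      aux_cast_dvd (by simpa using h)
    have := aux_resolve (c := 0) hd (by push_cast; rw [abs_lt]; omega)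
    push_cast at this; omega

/-- singles are injective -/
lemma aux_sing_inj (m : ℕ) (t1 t2 : Fin (2 * m + 1)) (h : sfun m t1 = sfun m t2) : t1 = t2 := by
  have h1 := t1.isLt
  have h2 := t2.isLt
  apply Fin.ext
  by_cases hp1 : t1.val % 2 = 0 <;> by_cases hp2 : t2.val % 2 = 0
  · simp only [sfun] at h; rw [if_pos hp1, if_pos hp2] at h
    have hd := aux_cast_dvd h
    have := aux_resolve (c := 0) hd (by push_cast; rw [abs_lt]; omega)
    push_cast at this; omega
  · simp only [sfun] at h; rw [if_pos hp1, if_neg hp2] at h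
    have hd := aux_cast_dvd h
    have := aux_resolve (c := 0) hd (by push_cast; rw [abs_lt]; omega)
    push_cast at this; omega
  · simp only [sfun] at h; rw [if_neg hp1, if_pos hp2] at h
    have hd := aux_cast_dvd h
    have := aux_resolve (c := 0) hd (by push_cast; rw [abs_lt]; omega)
    push_cast at this; omega
  · simp only [sfun] at h; rw [if_neg hp1, if_neg hp2] at h
    have hd := aux_cast_dvd h
    have := aux_resolve (c := 0) hd (by push_cast; rw [abs_lt]; omega)
    push_cast at this; omega

/-- doubles are nonzero -/
lemma aux_dbl_ne_zero (m t : ℕ) (ht : t + 1 < 2 * m + 1) :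
    ((4 * m + 4 + 2 * t : ℕ) : ZMod (4 * m + 2)) ≠ 0 := by
  intro h
  have hd : ((4 * m + 2 : ℕ) : ℤ) ∣ ((4 * m + 4 + 2 * t : ℕ) : ℤ) - ((0 : ℕ) : ℤ) :=
    aux_cast_dvd (by simpa using h)
  have := aux_resolve (c := 1) hd (by push_cast; rw [abs_lt]; omega)
  push_cast at this; omega

/-- doubles are injective -/
lemma aux_dbl_inj (m t1 t2 : ℕ) (h1 : t1 + 1 < 2 * m + 1) (h2 : t2 + 1 < 2 * m + 1)
    (h : ((4 * m + 4 + 2 * t1 : ℕ) : ZMod (4 * m + 2)) = ((4 * m + 4 + 2 * t2 : ℕ))) :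
    t1 = t2 := by
  have hd := aux_cast_dvd h
  have := aux_resolve (c := 0) hd (by push_cast; rw [abs_lt]; omega)
  push_cast at this; omega

/-- a single never equals a double (parity) -/
lemma aux_sing_ne_dbl (m : ℕ) (hmo : Odd m) (t1 : Fin (2 * m + 1)) (t2 : ℕ)
    (ht2 : t2 + 1 < 2 * m + 1) :
    sfun m t1 ≠ ((4 * m + 4 + 2 * t2 : ℕ) : ZMod (4 * m + 2)) := by
  obtain ⟨r, hr⟩ := hmo
  intro h
  have two_dvd : (2 : ℤ) ∣ ((4 * m + 2 : ℕ) : ℤ) := by push_cast; omega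
  by_cases hp : t1.val % 2 = 0
  · rw [sfun, if_pos hp] at h
    have hd := dvd_trans two_dvd (aux_cast_dvd h)
    push_cast at hd
    omega
  · rw [sfun, if_neg hp] at h
    have hd := dvd_trans two_dvd (aux_cast_dvd h)
    push_cast at hd
    omega

/-- Case 2 of Theorem: for odd `m ≥ 1` and `n = 2m+1`, the sequence with
`s_{2j+1} = 3m+2+2j`, `s_{2j+2} = m+2+2j` (`0 ≤ j ≤ m−1`) and `s_{2m+1} = m`
(equivalently, `s_t = 3m+2+t` for even `t` and `s_t = m+1+t` for odd `t`, `t` 0-based)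
splits `ℤ_{4m+2}` by the non-cyclic error ball `E(n,2,1,0)`. -/
theorem stmt4 (m : ℕ) (hm : 1 ≤ m) (hmo : Odd m) :
    Splits (nonCyclicBall (2 * m + 1) 2 1 0)
      (fun t : Fin (2 * m + 1) =>
        if t.val % 2 = 0 then ((3 * m + 2 + t.val : ℕ) : ZMod (4 * m + 2))
        else ((m + 1 + t.val : ℕ) : ZMod (4 * m + 2))) := by
  show Splits (nonCyclicBall (2 * m + 1) 2 1 0) (sfun m)
  intro a ha b hb hab
  simp only at hab
  rcases aux_classify ha with h0a | ⟨ta, hta⟩ | ⟨ta, hta1, hta⟩ <;>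
    rcases aux_classify hb with h0b | ⟨tb, htb⟩ | ⟨tb, htb1, htb⟩
  · rw [h0a, h0b]
  · exfalso
    rw [h0a, htb] at hab
    simp only [Pi.zero_apply, zero_smul, Finset.sum_const_zero, aux_sum_sing] at hab
    exact aux_sing_ne_zero m hmo tb hab.symm
  · exfalso
    rw [h0a, htb] at hab
    rw [aux_sum_dbl (sfun m) tb htb1, aux_dbl_val m tb htb1] at hab
    simp only [Pi.zero_apply, zero_smul, Finset.sum_const_zero] at hab
    exact aux_dbl_ne_zero m tb htb1 hab.symm
  · exfalso
    rw [h0b, hta] at hab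
    simp only [Pi.zero_apply, zero_smul, Finset.sum_const_zero, aux_sum_sing] at hab
    exact aux_sing_ne_zero m hmo ta hab
  · rw [hta, htb] at hab ⊢
    rw [aux_sum_sing, aux_sum_sing] at hab
    rw [aux_sing_inj m ta tb hab]
  · exfalso
    rw [hta, htb] at hab
    rw [aux_sum_sing, aux_sum_dbl (sfun m) tb htb1, aux_dbl_val m tb htb1] at hab
    exact aux_sing_ne_dbl m hmo ta tb htb1 hab
  · exfalso
    rw [h0b, hta] at hab
    rw [aux_sum_dbl (sfun m) ta hta1, aux_dbl_val m ta hta1] at hab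
    simp only [Pi.zero_apply, zero_smul, Finset.sum_const_zero] at hab
    exact aux_dbl_ne_zero m ta hta1 hab
  · exfalso
    rw [hta, htb] at hab
    rw [aux_sum_sing, aux_sum_dbl (sfun m) ta hta1, aux_dbl_val m ta hta1] at hab
    exact aux_sing_ne_dbl m hmo tb ta hta1 hab.symm
  · rw [hta, htb] at hab ⊢
    rw [aux_sum_dbl (sfun m) ta hta1, aux_dbl_val m ta hta1,
      aux_sum_dbl (sfun m) tb htb1, aux_dbl_val m tb htb1] at hab
    rw [aux_dbl_inj m ta tb hta1 htb1 hab]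
end

section
/- Let m ≥ 3 be an odd integer and n = 2m. Define s ∈ (ℤ_{4m})^n as the concatenation s = s¹s²s³ of the sequences s¹ = (1, 3, 5, …, 2m−3) of length m−1, s² = (2m+1, 2m+5, 2m+9, …, 4m−1) of length (m+1)/2, and s³ = (4m−3, 4m−7, 4m−11, …, 2m−1) of length (m+1)/2. Then the non-cyclic error ball E(n,2,1,0) splits ℤ_{4m} with splitting sequence s. -/

def sN (m t : ℕ) : ℕ :=
  if t < m - 1 then 2 * t + 1
  else if t < m - 1 + (m + 1) / 2 then 2 * m + 1 + 4 * (t - (m - 1))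
  else 4 * m - 3 - 4 * (t - (m - 1) - (m + 1) / 2)

def rN (m t : ℕ) : ℕ :=
  if t < m - 2 then 4 * t + 4
  else if t = m - 2 then 4 * m - 2
  else if t < m - 1 + (m + 1) / 2 - 1 then 8 * (t - (m - 1)) + 6
  else if t = m - 1 + (m + 1) / 2 - 1 then 4 * m - 4
  else 4 * m - 10 - 8 * (t - (m - 1) - (m + 1) / 2)

lemma sN_facts (m t : ℕ) (hm : 3 ≤ m) (h2 : m % 2 = 1) (ht : t < 2 * m) :
    0 < sN m t ∧ sN m t < 4 * m ∧ sN m t % 2 = 1 := by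
  unfold sN; split_ifs <;> omega

lemma sN_inj (m t u : ℕ) (hm : 3 ≤ m) (h2 : m % 2 = 1) (ht : t < 2 * m) (hu : u < 2 * m)
    (h : sN m t = sN m u) : t = u := by
  unfold sN at h; split_ifs at h <;> omega

lemma rN_facts (m t : ℕ) (hm : 3 ≤ m) (h2 : m % 2 = 1) (ht : t + 1 < 2 * m) :
    2 ≤ rN m t ∧ rN m t < 4 * m ∧ rN m t % 2 = 0 := by
  unfold rN; split_ifs <;> omega

lemma rN_inj (m t u : ℕ) (hm : 3 ≤ m) (h2 : m % 2 = 1) (ht : t + 1 < 2 * m)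
    (hu : u + 1 < 2 * m) (h : rN m t = rN m u) : t = u := by
  unfold rN at h; split_ifs at h <;> omega

lemma sum_eq (m t : ℕ) (hm : 3 ≤ m) (h2 : m % 2 = 1) (ht : t + 1 < 2 * m) :
    sN m t + sN m (t + 1) = rN m t + (if t < m - 1 then 0 else 4 * m) := by
  unfold sN rN; split_ifs <;> omega

lemma pair_cast (m t : ℕ) (hm : 3 ≤ m) (h2 : m % 2 = 1) (ht : t + 1 < 2 * m) :
    ((sN m t : ZMod (4 * m)) + (sN m (t + 1) : ZMod (4 * m))) = (rN m t : ZMod (4 * m)) := by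
  have h := sum_eq m t hm h2 ht
  have hc : ((sN m t + sN m (t + 1) : ℕ) : ZMod (4 * m))
      = ((rN m t + if t < m - 1 then 0 else 4 * m : ℕ) : ZMod (4 * m)) := by rw [h]
  rw [Nat.cast_add, Nat.cast_add] at hc
  rw [hc]
  split_ifs <;> simp [ZMod.natCast_self]

lemma ball_cases {n : ℕ} {e : Fin n → ℤ} (he : e ∈ nonCyclicBall n 2 1 0) :
    e = 0 ∨ (∃ t : Fin n, e = Pi.single t 1) ∨
      ∃ t : ℕ, ∃ h1 : t < n, ∃ h2 : t + 1 < n,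
        e = Pi.single (⟨t, h1⟩ : Fin n) 1 + Pi.single (⟨t + 1, h2⟩ : Fin n) 1 := by
  obtain ⟨hb, i, hi⟩ := he
  have hval : ∀ ℓ, e ℓ = 0 ∨ e ℓ = 1 := fun ℓ => by have := hb ℓ; omega
  by_cases hn : i.val + 1 < n
  · set j : Fin n := ⟨i.val + 1, hn⟩ with hj
    have hij : i ≠ j := by
      intro h; have := congrArg Fin.val h; simp [hj] at this
    have hz : ∀ ℓ, ℓ ≠ i → ℓ ≠ j → e ℓ = 0 := by
      intro ℓ hℓi hℓj
      apply hi
      have h1 : ℓ.val ≠ i.val := fun h => hℓi (Fin.ext h)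
      have h2 : ℓ.val ≠ i.val + 1 := fun h => hℓj (Fin.ext h)
      omega
    rcases hval i with h0 | h1 <;> rcases hval j with k0 | k1
    · left; funext ℓ
      by_cases hℓ : ℓ = i
      · simpa [hℓ] using h0
      · by_cases hℓ2 : ℓ = j
        · simpa [hℓ2] using k0
        · simpa using hz ℓ hℓ hℓ2
    · right; left; refine ⟨j, funext fun ℓ => ?_⟩
      simp only [Pi.single_apply]
      split_ifs with hA
      · rw [hA]; exact k1
      · by_cases hℓ2 : ℓ = i
        · rw [hℓ2]; exact h0
        · exact hz ℓ hℓ2 hA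
    · right; left; refine ⟨i, funext fun ℓ => ?_⟩
      simp only [Pi.single_apply]
      split_ifs with hA
      · rw [hA]; exact h1
      · by_cases hℓ2 : ℓ = j
        · rw [hℓ2]; exact k0
        · exact hz ℓ hA hℓ2
    · right; right
      refine ⟨i.val, i.isLt, hn, funext fun ℓ => ?_⟩
      simp only [Pi.add_apply, Pi.single_apply]
      have hii : (⟨i.val, i.isLt⟩ : Fin n) = i := rfl
      split_ifs with hA hB hB
      · exfalso
        rw [hA] at hB
        have := congrArg Fin.val hB
        simp at this
      · rw [hA, hii]; simpa using h1
      · rw [hB]; simpa using k1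
      · have e1 : ℓ ≠ i := by rw [← hii]; exact hA
        have e2 : ℓ ≠ j := hB
        simpa using hz ℓ e1 e2
  · have hz : ∀ ℓ, ℓ ≠ i → e ℓ = 0 := by
      intro ℓ hℓ
      apply hi
      have h1 : ℓ.val ≠ i.val := fun h => hℓ (Fin.ext h)
      have := ℓ.isLt
      omega
    rcases hval i with h0 | h1
    · left; funext ℓ
      by_cases hℓ : ℓ = i
      · simpa [hℓ] using h0
      · simpa using hz ℓ hℓ
    · right; left; refine ⟨i, funext fun ℓ => ?_⟩
      simp only [Pi.single_apply]
      split_ifs with hA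
      · rw [hA]; exact h1
      · exact hz ℓ hA

lemma sum_single {n : ℕ} {G : Type*} [AddCommGroup G] (s : Fin n → G) (t : Fin n) :
    ∑ i, (Pi.single t 1 : Fin n → ℤ) i • s i = s t := by
  simp [Pi.single_apply, ite_smul]

lemma sum_pair {n : ℕ} {G : Type*} [AddCommGroup G] (s : Fin n → G) (t u : Fin n) :
    ∑ i, (Pi.single t 1 + Pi.single u 1 : Fin n → ℤ) i • s i = s t + s u := by
  simp [Pi.single_apply, ite_smul, add_smul, Finset.sum_add_distrib]

lemma cast_eq_of_lt {M x y : ℕ} (hx : x < M) (hy : y < M) (h : (x : ZMod M) = y) : x = y := by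
  have := (ZMod.natCast_eq_natCast_iff x y M).1 h
  simpa [Nat.ModEq, Nat.mod_eq_of_lt hx, Nat.mod_eq_of_lt hy] using this

/-- Case 4 of Theorem: for odd `m ≥ 3` and `n = 2m`, the concatenation of
`s¹ = (1,3,…,2m−3)` (length `m−1`), `s² = (2m+1,2m+5,…,4m−1)` (length `(m+1)/2`) and
`s³ = (4m−3,4m−7,…,2m−1)` (length `(m+1)/2`) splits `ℤ_{4m}` by the non-cyclic error ball
`E(n,2,1,0)`. -/
theorem stmt6 (m : ℕ) (hm : 3 ≤ m) (hmo : Odd m) :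
    Splits (nonCyclicBall (2 * m) 2 1 0)
      (fun t : Fin (2 * m) =>
        if t.val < m - 1 then ((2 * t.val + 1 : ℕ) : ZMod (4 * m))
        else if t.val < m - 1 + (m + 1) / 2 then
          ((2 * m + 1 + 4 * (t.val - (m - 1)) : ℕ) : ZMod (4 * m))
        else ((4 * m - 3 - 4 * (t.val - (m - 1) - (m + 1) / 2) : ℕ) : ZMod (4 * m))) := by
  have h2 : m % 2 = 1 := Nat.odd_iff.mp hmo
  have hfun : (fun t : Fin (2 * m) =>
        if t.val < m - 1 then ((2 * t.val + 1 : ℕ) : ZMod (4 * m))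
        else if t.val < m - 1 + (m + 1) / 2 then
          ((2 * m + 1 + 4 * (t.val - (m - 1)) : ℕ) : ZMod (4 * m))
        else ((4 * m - 3 - 4 * (t.val - (m - 1) - (m + 1) / 2) : ℕ) : ZMod (4 * m)))
      = fun t : Fin (2 * m) => ((sN m t.val : ℕ) : ZMod (4 * m)) := by
    funext t; simp only [sN]; split_ifs <;> rfl
  rw [hfun]
  intro a ha b hb hab
  set s : Fin (2 * m) → ZMod (4 * m) := fun t => ((sN m t.val : ℕ) : ZMod (4 * m)) with hs
  have hsv : ∀ t : Fin (2 * m), s t = ((sN m t.val : ℕ) : ZMod (4 * m)) := fun _ => rfl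
  have hz0 : (∑ i, (0 : Fin (2 * m) → ℤ) i • s i) = 0 := by
    simp
  rcases ball_cases ha with rfl | ⟨t, rfl⟩ | ⟨t, ht1, ht2, rfl⟩ <;>
    rcases ball_cases hb with rfl | ⟨u, rfl⟩ | ⟨u, hu1, hu2, rfl⟩ <;>
      simp only [sum_single, sum_pair, hz0, hsv] at hab <;>
      [skip; skip; (rw [pair_cast m _ hm h2 hu2] at hab); skip; skip;
       (rw [pair_cast m _ hm h2 hu2] at hab); (rw [pair_cast m _ hm h2 ht2] at hab);
       (rw [pair_cast m _ hm h2 ht2] at hab);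
       (rw [pair_cast m _ hm h2 ht2, pair_cast m _ hm h2 hu2] at hab)]
  · rfl
  · -- 0 = sN u
    exfalso
    have h0 : ((0 : ℕ) : ZMod (4 * m)) = ((sN m u.val : ℕ) : ZMod (4 * m)) := by
      rw [Nat.cast_zero]; simpa using hab
    have := cast_eq_of_lt (by omega) (sN_facts m u.val hm h2 u.isLt).2.1 h0
    have := (sN_facts m u.val hm h2 u.isLt).1
    omega
  · -- 0 = rN u
    exfalso
    have h0 : ((0 : ℕ) : ZMod (4 * m)) = ((rN m u : ℕ) : ZMod (4 * m)) := by
      rw [Nat.cast_zero]; simpa using hab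
    have := cast_eq_of_lt (by omega) (rN_facts m u hm h2 hu2).2.1 h0
    have := (rN_facts m u hm h2 hu2).1
    omega
  · -- sN t = 0
    exfalso
    have h0 : ((sN m t.val : ℕ) : ZMod (4 * m)) = ((0 : ℕ) : ZMod (4 * m)) := by
      rw [Nat.cast_zero]; simpa using hab
    have := cast_eq_of_lt (sN_facts m t.val hm h2 t.isLt).2.1 (by omega) h0
    have := (sN_facts m t.val hm h2 t.isLt).1
    omega
  · -- sN t = sN u
    have := cast_eq_of_lt (sN_facts m t.val hm h2 t.isLt).2.1
      (sN_facts m u.val hm h2 u.isLt).2.1 hab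
    have := sN_inj m t.val u.val hm h2 t.isLt u.isLt this
    rw [Fin.ext this]
  · -- sN t = rN u : parity
    exfalso
    have := cast_eq_of_lt (sN_facts m t.val hm h2 t.isLt).2.1
      (rN_facts m u hm h2 hu2).2.1 hab
    have p1 := (sN_facts m t.val hm h2 t.isLt).2.2
    have p2 := (rN_facts m u hm h2 hu2).2.2
    omega
  · -- rN t = 0
    exfalso
    have h0 : ((rN m t : ℕ) : ZMod (4 * m)) = ((0 : ℕ) : ZMod (4 * m)) := by
      rw [Nat.cast_zero]; simpa using hab
    have := cast_eq_of_lt (rN_facts m t hm h2 ht2).2.1 (by omega) h0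
    have := (rN_facts m t hm h2 ht2).1
    omega
  · -- rN t = sN u : parity
    exfalso
    have := cast_eq_of_lt (rN_facts m t hm h2 ht2).2.1
      (sN_facts m u.val hm h2 u.isLt).2.1 hab
    have p1 := (rN_facts m t hm h2 ht2).2.2
    have p2 := (sN_facts m u.val hm h2 u.isLt).2.2
    omega
  · -- rN t = rN u
    have := cast_eq_of_lt (rN_facts m t hm h2 ht2).2.1
      (rN_facts m u hm h2 hu2).2.1 hab
    have htu := rN_inj m t u hm h2 ht2 hu2 this
    subst htu
    rfl
end
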